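/- Let Cl(p,q,r) be a Clifford algebra with n = p+q+r, M ∈ Cl^m(p,q,r), K ∈ Cl^k(p,q,r), and L ∈ Λ^{n−m}_r. If m is odd and k is even, or if m and n are even and k is odd, then (KL)M = M·α(KL), where α is the grade involution. -/

import Mathlib

open CliffordAlgebra

noncomputable section

/-- Diagonal weights: `p` entries `+1`, `q` entries `-1`, `r` entries `0`. -/
def cliffSig (p q : ℕ) (i : ℕ) : ℝ := if i < p then 1 else if i < p + q then -1 else 0

/-- The quadratic form of signature `(p, q, r)` on `ℝ^(p+q+r)`. -/
def Qf (p q r : ℕ) : QuadraticForm ℝ (Fin (p + q + r) → ℝ) :=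
  QuadraticMap.weightedSumSquares ℝ (fun i : Fin (p + q + r) => cliffSig p q (i : ℕ))

/-- The `i`-th generator `e_i` of `Cl(p,q,r)`. -/
def gen (p q r : ℕ) (i : Fin (p + q + r)) : CliffordAlgebra (Qf p q r) :=
  ι (Qf p q r) (Pi.single i 1)

/-- The grade-`m` subspace `Cl^m(p,q,r)`: span of products of `m` distinct generators
with increasing indices. -/
def gradeSubspace (p q r m : ℕ) : Submodule ℝ (CliffordAlgebra (Qf p q r)) :=
  Submodule.span ℝ {x | ∃ l : List (Fin (p + q + r)),
    l.Chain' (· < ·) ∧ l.length = m ∧ x = (l.map (gen p q r)).prod}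

/-- `Λ_r`: the subalgebra generated by the `r` null generators. -/
def LambdaR (p q r : ℕ) : Subalgebra ℝ (CliffordAlgebra (Qf p q r)) :=
  Algebra.adjoin ℝ {x | ∃ i : Fin (p + q + r), p + q ≤ (i : ℕ) ∧ x = gen p q r i}

/-- `Λ^d_r`: the degree-`d` component of `Λ_r`. -/
def LambdaDeg (p q r d : ℕ) : Submodule ℝ (CliffordAlgebra (Qf p q r)) :=
  Submodule.span ℝ {x | ∃ l : List (Fin (p + q + r)),
    l.Chain' (· < ·) ∧ l.length = d ∧ (∀ i ∈ l, p + q ≤ (i : ℕ)) ∧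
    x = (l.map (gen p q r)).prod}

/-- The pseudoscalar `e_1 ⋯ e_n`. -/
def pseudoscalar (p q r : ℕ) : CliffordAlgebra (Qf p q r) :=
  ((List.finRange (p + q + r)).map (gen p q r)).prod

namespace Stmt9Aux

variable (p q r : ℕ)

/-- product of generators along a list -/
def genProd (l : List (Fin (p + q + r))) : CliffordAlgebra (Qf p q r) :=
  (l.map (gen p q r)).prod

@[simp] lemma genProd_nil : genProd p q r [] = 1 := rfl

lemma genProd_cons (a : Fin (p+q+r)) (l : List (Fin (p+q+r))) :
    genProd p q r (a :: l) = gen p q r a * genProd p q r l := by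
  simp [genProd]

lemma genProd_append (l₁ l₂ : List (Fin (p+q+r))) :
    genProd p q r (l₁ ++ l₂) = genProd p q r l₁ * genProd p q r l₂ := by
  simp [genProd]

lemma Qf_single (i : Fin (p+q+r)) : Qf p q r (Pi.single i 1) = cliffSig p q i := by
  rw [Qf, QuadraticMap.weightedSumSquares_apply]
  rw [Finset.sum_eq_single i]
  · simp
  · intro t _ ht
    simp [Pi.single_apply, ht]
  · simp

lemma gen_sq (i : Fin (p+q+r)) :
    gen p q r i * gen p q r i = algebraMap ℝ _ (cliffSig p q i) := by
  rw [gen, ι_sq_scalar, Qf_single]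

lemma gen_sq_null {i : Fin (p+q+r)} (hi : p + q ≤ (i : ℕ)) :
    gen p q r i * gen p q r i = 0 := by
  rw [gen_sq]
  have : cliffSig p q i = 0 := by
    rw [cliffSig, if_neg (by omega), if_neg (by omega)]
  rw [this, map_zero]

lemma isOrtho_single {i j : Fin (p+q+r)} (hij : i ≠ j) :
    (Qf p q r).IsOrtho (Pi.single i 1) (Pi.single j 1) := by
  rw [QuadraticMap.isOrtho_def]
  simp only [Qf, QuadraticMap.weightedSumSquares_apply]
  rw [← Finset.sum_add_distrib]
  apply Finset.sum_congr rfl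
  intro t _
  rcases eq_or_ne t i with rfl | hti
  · simp [Pi.single_apply, Ne.symm hij]
  · rcases eq_or_ne t j with rfl | htj
    · simp [Pi.single_apply, hti]
    · simp [Pi.single_apply, hti, htj]

lemma gen_anticomm {i j : Fin (p+q+r)} (hij : i ≠ j) :
    gen p q r i * gen p q r j = -(gen p q r j * gen p q r i) :=
  ι_mul_ι_comm_of_isOrtho (isOrtho_single p q r hij)


lemma gen_mul_genProd_of_not_mem {j : Fin (p+q+r)} {l : List (Fin (p+q+r))} (h : j ∉ l) :
    gen p q r j * genProd p q r l = (-1:ℝ)^l.length • (genProd p q r l * gen p q r j) := by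
  induction l with
  | nil => simp
  | cons a t ih =>
    simp only [List.mem_cons, not_or] at h
    obtain ⟨hja, hjt⟩ := h
    rw [genProd_cons, ← mul_assoc, gen_anticomm p q r hja, neg_mul, mul_assoc, ih hjt,
      mul_smul_comm, ← neg_smul, List.length_cons, pow_succ, mul_comm _ (-1:ℝ), neg_one_mul,
      neg_smul, mul_assoc]
    rw [neg_smul]

lemma genProd_mul_gen_of_not_mem {j : Fin (p+q+r)} {l : List (Fin (p+q+r))} (h : j ∉ l) :
    genProd p q r l * gen p q r j = (-1:ℝ)^l.length • (gen p q r j * genProd p q r l) := by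
  rw [gen_mul_genProd_of_not_mem p q r h, smul_smul, ← pow_add]
  rw [Even.neg_one_pow ⟨l.length, rfl⟩, one_smul]

lemma gen_mul_genProd_of_mem_null {j : Fin (p+q+r)} {l : List (Fin (p+q+r))}
    (hj : p + q ≤ (j : ℕ)) (hmem : j ∈ l) :
    gen p q r j * genProd p q r l = 0 := by
  induction l with
  | nil => simp at hmem
  | cons a t ih =>
    rcases eq_or_ne j a with rfl | hne
    · rw [genProd_cons, ← mul_assoc, gen_sq_null p q r hj, zero_mul]
    · have hjt : j ∈ t := by
        rcases List.mem_cons.mp hmem with h1 | h1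
        · exact absurd h1 hne
        · exact h1
      rw [genProd_cons, ← mul_assoc, gen_anticomm p q r hne, neg_mul, mul_assoc, ih hjt,
        mul_zero, neg_zero]

lemma genProd_eq_zero_of_dup {j : Fin (p+q+r)} {l : List (Fin (p+q+r))}
    (hj : p + q ≤ (j : ℕ)) (h2 : 2 ≤ l.count j) : genProd p q r l = 0 := by
  induction l with
  | nil => simp at h2
  | cons a t ih =>
    rcases eq_or_ne j a with rfl | hne
    · have hjt : j ∈ t := by
        have := h2
        rw [List.count_cons_self] at this
        exact List.count_pos_iff.mp (by omega)
      rw [genProd_cons, gen_mul_genProd_of_mem_null p q r hj hjt]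
    · have h2t : 2 ≤ t.count j := by
        rwa [List.count_cons_of_ne hne.symm] at h2
      rw [genProd_cons, ih h2t, mul_zero]

lemma involute_genProd (l : List (Fin (p+q+r))) :
    involute (genProd p q r l) = (-1:ℝ)^l.length • genProd p q r l := by
  induction l with
  | nil => simp
  | cons a t ih =>
    rw [genProd_cons, map_mul, ih]
    have : involute (gen p q r a) = -(gen p q r a) := involute_ι _
    rw [this, neg_mul, mul_smul_comm, ← neg_smul, List.length_cons, pow_succ,
      mul_comm _ (-1:ℝ), neg_one_mul, neg_smul]

lemma genProd_mul_comm_of_disjoint (l₁ l₂ : List (Fin (p+q+r))) (h : ∀ j ∈ l₁, j ∉ l₂) :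
    genProd p q r l₁ * genProd p q r l₂
      = (-1:ℝ)^(l₁.length * l₂.length) • (genProd p q r l₂ * genProd p q r l₁) := by
  induction l₁ with
  | nil => simp
  | cons a t ih =>
    have he : t.length * l₂.length + l₂.length = (a :: t).length * l₂.length := by
      simp [List.length_cons]; ring
    rw [genProd_cons, mul_assoc, ih (fun j hj => h j (List.mem_cons_of_mem a hj)),
      mul_smul_comm, ← mul_assoc, gen_mul_genProd_of_not_mem p q r (h a List.mem_cons_self),
      smul_mul_assoc, smul_smul, ← pow_add, he, mul_assoc]


lemma gen_mul_genProd_full (i : Fin (p+q+r)) (w : List (Fin (p+q+r)))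
    (hw : ∀ t, w.count t = 1) :
    gen p q r i * genProd p q r w
      = (-1:ℝ)^(w.length - 1) • (genProd p q r w * gen p q r i) := by
  have hi : i ∈ w := List.count_pos_iff.mp (by rw [hw i]; norm_num)
  obtain ⟨A, B, rfl⟩ := List.append_of_mem hi
  have hcount := hw i
  rw [List.count_append, List.count_cons_self] at hcount
  have hiA : i ∉ A := by
    intro hmem
    have := List.count_pos_iff.mpr hmem
    omega
  have hiB : i ∉ B := by
    intro hmem
    have := List.count_pos_iff.mpr hmem
    omega
  have hlen : (A ++ i :: B).length - 1 = A.length + B.length := by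
    simp
  rw [hlen]
  have hexp : genProd p q r (A ++ i :: B) = genProd p q r A * (gen p q r i * genProd p q r B) := by
    rw [genProd_append, genProd_cons]
  rw [hexp]
  -- LHS
  rw [← mul_assoc, ← mul_assoc, gen_mul_genProd_of_not_mem p q r hiA, smul_mul_assoc,
    smul_mul_assoc, mul_assoc _ _ (gen p q r i), mul_assoc, gen_sq p q r i]
  -- RHS
  rw [mul_assoc _ (gen p q r i * genProd p q r B), mul_assoc (gen p q r i),
    genProd_mul_gen_of_not_mem p q r hiB, mul_smul_comm, mul_smul_comm, smul_smul,
    ← mul_assoc (gen p q r i), gen_sq p q r i, ← pow_add]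
  rw [Algebra.algebraMap_eq_smul_one]
  congr 1
  rw [show A.length + B.length + B.length = A.length + 2*B.length by ring, pow_add, pow_mul,
    neg_one_sq, one_pow, mul_one]

lemma genProd_mul_genProd_full (u w : List (Fin (p+q+r))) (hw : ∀ t, w.count t = 1) :
    genProd p q r u * genProd p q r w
      = (-1:ℝ)^(u.length * (w.length - 1)) • (genProd p q r w * genProd p q r u) := by
  induction u with
  | nil => simp
  | cons a t ih =>
    have he : t.length * (w.length - 1) + (w.length - 1) = (a :: t).length * (w.length - 1) := by
      simp [List.length_cons]; ring
    rw [genProd_cons, mul_assoc, ih, mul_smul_comm, ← mul_assoc,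
      gen_mul_genProd_full p q r a w hw, smul_mul_assoc, smul_smul, ← pow_add, he, mul_assoc]


lemma neg_one_pow_congr {a b : ℕ} (hab : Even a ↔ Even b) : (-1:ℝ)^a = (-1:ℝ)^b := by
  rcases Nat.even_or_odd a with ha | ha
  · rw [ha.neg_one_pow, (hab.mp ha).neg_one_pow]
  · have hb : Odd b := by
      rcases Nat.even_or_odd b with hb | hb
      · exact absurd (hab.mpr hb) (Nat.not_even_iff_odd.mpr ha)
      · exact hb
    rw [ha.neg_one_pow, hb.neg_one_pow]

lemma sign_eq {m k d n : ℕ} (hmd : m + d = n) (hk0 : n = 0 → k = 0)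
    (h : (Odd m ∧ Even k) ∨ (Even m ∧ Even n ∧ Odd k)) :
    (-1:ℝ)^(d * m + k * (n - 1)) = (-1:ℝ)^(k + d + k * d) := by
  apply neg_one_pow_congr
  rcases h with ⟨hm, hk⟩ | ⟨hm, hn, hk⟩
  · have hm' : ¬ Even m := Nat.not_even_iff_odd.mpr hm
    simp [Nat.even_add, Nat.even_mul, hk, hm']
  · have hn1 : n ≠ 0 := by
      intro h0
      rw [hk0 h0] at hk
      simp at hk
    have hd : Even d := by
      rw [Nat.even_iff] at hm hn ⊢
      omega
    have hn1' : ¬ Even (n - 1) := by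
      rw [Nat.even_iff] at hn ⊢
      omega
    have hk' : ¬ Even k := Nat.not_even_iff_odd.mpr hk
    simp [Nat.even_add, Nat.even_mul, hd, hk', hn1']

lemma key (m k : ℕ) (lM lK lL : List (Fin (p+q+r)))
    (hMnd : lM.Nodup) (hLnd : lL.Nodup) (hLnull : ∀ j ∈ lL, p + q ≤ (j : ℕ))
    (hm : lM.length = m) (hk : lK.length = k) (hd : lL.length = p + q + r - m)
    (h : (Odd m ∧ Even k) ∨ (Even m ∧ Even (p + q + r) ∧ Odd k)) :
    genProd p q r lK * genProd p q r lL * genProd p q r lM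
      = genProd p q r lM * involute (genProd p q r lK * genProd p q r lL) := by
  by_cases hKL : ∃ j ∈ lL, j ∈ lK
  · obtain ⟨j, hjL, hjK⟩ := hKL
    have hz : genProd p q r lK * genProd p q r lL = 0 := by
      rw [← genProd_append]
      apply genProd_eq_zero_of_dup p q r (hLnull j hjL)
      rw [List.count_append]
      have h1 := List.count_pos_iff.mpr hjK
      have h2 := List.count_pos_iff.mpr hjL
      omega
    rw [hz, zero_mul, map_zero, mul_zero]
  by_cases hML : ∃ j ∈ lL, j ∈ lM
  · obtain ⟨j, hjL, hjM⟩ := hML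
    have hz1 : genProd p q r lL * genProd p q r lM = 0 := by
      rw [← genProd_append]
      apply genProd_eq_zero_of_dup p q r (hLnull j hjL)
      rw [List.count_append]
      have h1 := List.count_pos_iff.mpr hjL
      have h2 := List.count_pos_iff.mpr hjM
      omega
    rw [mul_assoc, hz1, mul_zero]
    rw [← genProd_append, involute_genProd, mul_smul_comm, ← genProd_append]
    rw [genProd_eq_zero_of_dup p q r (hLnull j hjL) (by
      rw [List.count_append, List.count_append]
      have h1 := List.count_pos_iff.mpr hjL
      have h2 := List.count_pos_iff.mpr hjM
      omega), smul_zero]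
  · push_neg at hKL hML
    have hdisjML : List.Disjoint lM lL := fun a haM haL => hML a haL haM
    have hndW : (lM ++ lL).Nodup := List.Nodup.append hMnd hLnd hdisjML
    have hle := List.Nodup.length_le_card hndW
    rw [Fintype.card_fin] at hle
    rw [List.length_append] at hle
    have hmle : m ≤ p + q + r := by omega
    have hfull_len : (lM ++ lL).length = p + q + r := by
      rw [List.length_append, hm, hd]; omega
    have hmemW : ∀ t, t ∈ lM ++ lL := by
      intro t
      have hcard : (lM ++ lL).toFinset.card = Fintype.card (Fin (p+q+r)) := by
        rw [List.toFinset_card_of_nodup hndW, hfull_len, Fintype.card_fin]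
      have := Finset.eq_univ_of_card _ hcard
      rw [← List.mem_toFinset, this]
      exact Finset.mem_univ t
    have hw : ∀ t, (lM ++ lL).count t = 1 :=
      fun t => List.count_eq_one_of_mem hndW (hmemW t)
    -- LHS
    have hLM : genProd p q r lL * genProd p q r lM
        = (-1:ℝ)^(lL.length * lM.length) • genProd p q r (lM ++ lL) := by
      rw [genProd_mul_comm_of_disjoint p q r lL lM (fun j hj => fun hj2 => hML j hj hj2),
        genProd_append]
    rw [mul_assoc, hLM, mul_smul_comm,
      genProd_mul_genProd_full p q r lK (lM ++ lL) hw, smul_smul, ← pow_add]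
    -- RHS
    have hKLcomm : genProd p q r lK * genProd p q r lL
        = (-1:ℝ)^(lK.length * lL.length) • (genProd p q r lL * genProd p q r lK) := by
      exact genProd_mul_comm_of_disjoint p q r lK lL (fun j hj => fun hj2 => hKL j hj2 hj)
    conv_rhs =>
      rw [← genProd_append p q r lK lL, involute_genProd, List.length_append, genProd_append,
        hKLcomm, smul_smul, mul_smul_comm, ← mul_assoc, ← genProd_append p q r lM lL]
    congr 1
    rw [← pow_add, hm, hk, hd, hfull_len]
    have hd' : lL.length = p + q + r - m := hd
    have hmd : m + (p + q + r - m) = p + q + r := by omega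
    have hk0 : p + q + r = 0 → k = 0 := by
      intro h0
      rw [← hk]
      cases lK with
      | nil => rfl
      | cons a t => exact absurd a.2 (by omega)
    exact sign_eq hmd hk0 h

end Stmt9Aux

/-- For `M ∈ Cl^m`, `K ∈ Cl^k`, `L ∈ Λ^{n-m}_r`: if `m` is odd and `k` even, or `m, n` even
and `k` odd, then `(KL)M = M·α(KL)`. -/
theorem stmt9 (p q r m k : ℕ) (M K L : CliffordAlgebra (Qf p q r))
    (hM : M ∈ gradeSubspace p q r m) (hK : K ∈ gradeSubspace p q r k)
    (hL : L ∈ LambdaDeg p q r (p + q + r - m))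
    (h : (Odd m ∧ Even k) ∨ (Even m ∧ Even (p + q + r) ∧ Odd k)) :
    K * L * M = M * involute (K * L) := by
  rw [LambdaDeg] at hL
  rw [gradeSubspace] at hM hK
  induction hL using Submodule.span_induction with
  | mem x hx =>
    obtain ⟨lL, hLchain, hLlen, hLnull, rfl⟩ := hx
    induction hK using Submodule.span_induction with
    | mem y hy =>
      obtain ⟨lK, hKchain, hKlen, rfl⟩ := hy
      induction hM using Submodule.span_induction with
      | mem z hz =>
        obtain ⟨lM, hMchain, hMlen, rfl⟩ := hz
        have hMnd : lM.Nodup := (List.isChain_iff_pairwise.mp hMchain).imp ne_of_lt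
        have hLnd : lL.Nodup := (List.isChain_iff_pairwise.mp hLchain).imp ne_of_lt
        exact Stmt9Aux.key p q r m k lM lK lL hMnd hLnd hLnull hMlen hKlen hLlen h
      | zero => simp
      | add a b _ _ iha ihb => rw [mul_add, add_mul, iha, ihb]
      | smul c a _ ih => rw [mul_smul_comm, smul_mul_assoc, ih]
    | zero => simp
    | add a b _ _ iha ihb => rw [add_mul, add_mul, map_add, mul_add, iha, ihb]
    | smul c a _ ih => rw [smul_mul_assoc, smul_mul_assoc, map_smul, mul_smul_comm, ih]
  | zero => simp
  | add a b _ _ iha ihb => rw [mul_add, add_mul, map_add, mul_add, iha, ihb]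
  | smul c a _ ih => rw [mul_smul_comm, smul_mul_assoc, map_smul, mul_smul_comm, ih]
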